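/- Let 0 < ε < 1 and let α > 0 satisfy tan(α) = −tanh(α) (respectively tan(α) = coth(α), tan(α) = −coth(α), tan(α) = tanh(α)). Then the function u(x,y) = cos(αx)cosh(αy) (respectively sin(αx)cosh(αy), cos(αx)sinh(αy), sin(αx)sinh(αy)) is harmonic on the square (−1,1)² and satisfies the Steklov condition ∂_ν u = σ u on the boundary with σ = α tanh(α) (respectively α tanh(α), α coth(α), α coth(α)). -/

import Mathlib

lemma hd_cos (α x : ℝ) : HasDerivAt (fun t => Real.cos (α*t)) (-(α * Real.sin (α*x))) x := by
  simpa [mul_comm, Function.comp_def] using (Real.hasDerivAt_cos (α*x)).comp x ((hasDerivAt_id x).const_mul α)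

lemma hd_sin (α x : ℝ) : HasDerivAt (fun t => Real.sin (α*t)) (α * Real.cos (α*x)) x := by
  simpa [mul_comm, Function.comp_def] using (Real.hasDerivAt_sin (α*x)).comp x ((hasDerivAt_id x).const_mul α)

lemma hd_cosh (α x : ℝ) : HasDerivAt (fun t => Real.cosh (α*t)) (α * Real.sinh (α*x)) x := by
  simpa [mul_comm, Function.comp_def] using (Real.hasDerivAt_cosh (α*x)).comp x ((hasDerivAt_id x).const_mul α)

lemma hd_sinh (α x : ℝ) : HasDerivAt (fun t => Real.sinh (α*t)) (α * Real.cosh (α*x)) x := by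
  simpa [mul_comm, Function.comp_def] using (Real.hasDerivAt_sinh (α*x)).comp x ((hasDerivAt_id x).const_mul α)

lemma hd_cos' (α x : ℝ) :
    HasDerivAt (fun t => -(α * Real.sin (α*t))) (-(α^2 * Real.cos (α*x))) x := by
  have := ((hd_sin α x).const_mul α).neg
  simpa [pow_two, mul_assoc, Pi.neg_def] using this

lemma hd_sin' (α x : ℝ) :
    HasDerivAt (fun t => α * Real.cos (α*t)) (-(α^2 * Real.sin (α*x))) x := by
  have := (hd_cos α x).const_mul α
  simpa [pow_two, mul_assoc, mul_comm] using this

lemma hd_cosh' (α x : ℝ) :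
    HasDerivAt (fun t => α * Real.sinh (α*t)) (α^2 * Real.cosh (α*x)) x := by
  have := (hd_sinh α x).const_mul α
  simpa [pow_two, mul_assoc] using this

lemma hd_sinh' (α x : ℝ) :
    HasDerivAt (fun t => α * Real.cosh (α*t)) (α^2 * Real.sinh (α*x)) x := by
  have := (hd_cosh α x).const_mul α
  simpa [pow_two, mul_assoc] using this

/-- Partial derivative in `x` of a function on `ℝ²`. -/
noncomputable def pdx (u : ℝ × ℝ → ℝ) (p : ℝ × ℝ) : ℝ :=
  deriv (fun x => u (x, p.2)) p.1

/-- Partial derivative in `y` of a function on `ℝ²`. -/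
noncomputable def pdy (u : ℝ × ℝ → ℝ) (p : ℝ × ℝ) : ℝ :=
  deriv (fun y => u (p.1, y)) p.2

/-- The Laplacian `∂²u/∂x² + ∂²u/∂y²` of a function on `ℝ²`. -/
noncomputable def lap2 (u : ℝ × ℝ → ℝ) (p : ℝ × ℝ) : ℝ :=
  deriv (fun x => deriv (fun x' => u (x', p.2)) x) p.1 +
  deriv (fun y => deriv (fun y' => u (p.1, y')) y) p.2

/-- `u` is a Steklov eigenfunction of the square `(-1,1)²` with eigenvalue `σ`:
`Δu = 0` inside the square and `∂_ν u = σu` on each of the four sides, the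
outward normal derivative being `±∂_x u` on the sides `x = ±1` and `±∂_y u`
on the sides `y = ±1`. -/
def IsSquareSteklov (u : ℝ × ℝ → ℝ) (σ : ℝ) : Prop :=
  (∀ p : ℝ × ℝ, p ∈ Set.Ioo (-1 : ℝ) 1 ×ˢ Set.Ioo (-1 : ℝ) 1 → lap2 u p = 0) ∧
  (∀ y ∈ Set.Icc (-1 : ℝ) 1,
    pdx u (1, y) = σ * u (1, y) ∧ -(pdx u (-1, y)) = σ * u (-1, y)) ∧
  (∀ x ∈ Set.Icc (-1 : ℝ) 1,
    pdy u (x, 1) = σ * u (x, 1) ∧ -(pdy u (x, -1)) = σ * u (x, -1))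

lemma steklov_sep (α σ : ℝ) (F F' G G' : ℝ → ℝ)
    (hF : ∀ x, HasDerivAt F (F' x) x)
    (hF' : ∀ x, HasDerivAt F' (-(α^2 * F x)) x)
    (hG : ∀ y, HasDerivAt G (G' y) y)
    (hG' : ∀ y, HasDerivAt G' (α^2 * G y) y)
    (hx1 : F' 1 = σ * F 1) (hx2 : -(F' (-1)) = σ * F (-1))
    (hy1 : G' 1 = σ * G 1) (hy2 : -(G' (-1)) = σ * G (-1)) :
    IsSquareSteklov (fun p => F p.1 * G p.2) σ := by
  have hdx : ∀ y x : ℝ, deriv (fun x' => F x' * G y) x = F' x * G y := fun y x =>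
    ((hF x).mul_const (G y)).deriv
  have hdy : ∀ x y : ℝ, deriv (fun y' => F x * G y') y = F x * G' y := fun x y =>
    ((hG y).const_mul (F x)).deriv
  refine ⟨fun p _ => ?_, fun y _ => ?_, fun x _ => ?_⟩
  · show deriv (fun x => deriv (fun x' => F x' * G p.2) x) p.1 +
        deriv (fun y => deriv (fun y' => F p.1 * G y') y) p.2 = 0
    have e1 : (fun x => deriv (fun x' => F x' * G p.2) x) = fun x => F' x * G p.2 :=
      funext (hdx p.2)
    have e2 : (fun y => deriv (fun y' => F p.1 * G y') y) = fun y => F p.1 * G' y :=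
      funext (hdy p.1)
    rw [e1, e2, ((hF' p.1).mul_const (G p.2)).deriv, ((hG' p.2).const_mul (F p.1)).deriv]
    ring
  · constructor
    · show deriv (fun x => F x * G y) 1 = σ * (F 1 * G y)
      rw [hdx y 1, hx1]; ring
    · show -(deriv (fun x => F x * G y) (-1)) = σ * (F (-1) * G y)
      rw [hdx y (-1)]
      rw [show σ * (F (-1) * G y) = (σ * F (-1)) * G y by ring, ← hx2]; ring
  · constructor
    · show deriv (fun y => F x * G y) 1 = σ * (F x * G 1)
      rw [hdy x 1, hy1]; ring
    · show -(deriv (fun y => F x * G y) (-1)) = σ * (F x * G (-1))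
      rw [hdy x (-1)]
      rw [show σ * (F x * G (-1)) = F x * (σ * G (-1)) by ring, ← hy2]; ring

/-- Let `0 < ε < 1` and `α > 0`. If `tan α = -tanh α` (resp. `tan α = coth α`,
`tan α = -coth α`, `tan α = tanh α`) then `cos(αx)cosh(αy)` (resp.
`sin(αx)cosh(αy)`, `cos(αx)sinh(αy)`, `sin(αx)sinh(αy)`) is harmonic on the
square `(-1,1)²` and is a Steklov eigenfunction with eigenvalue `α tanh α`
(resp. `α tanh α`, `α coth α`, `α coth α`); here `coth = cosh/sinh`. -/
theorem square_steklov_families (ε : ℝ) (hε : 0 < ε) (hε1 : ε < 1)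
    (α : ℝ) (hα : 0 < α) :
    (Real.tan α = -Real.tanh α →
      IsSquareSteklov (fun p => Real.cos (α * p.1) * Real.cosh (α * p.2))
        (α * Real.tanh α)) ∧
    (Real.tan α = Real.cosh α / Real.sinh α →
      IsSquareSteklov (fun p => Real.sin (α * p.1) * Real.cosh (α * p.2))
        (α * Real.tanh α)) ∧
    (Real.tan α = -(Real.cosh α / Real.sinh α) →
      IsSquareSteklov (fun p => Real.cos (α * p.1) * Real.sinh (α * p.2))
        (α * (Real.cosh α / Real.sinh α))) ∧
    (Real.tan α = Real.tanh α →
      IsSquareSteklov (fun p => Real.sin (α * p.1) * Real.sinh (α * p.2))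
        (α * (Real.cosh α / Real.sinh α))) := by
  have hch : Real.cosh α ≠ 0 := (Real.cosh_pos α).ne'
  have hsh : Real.sinh α ≠ 0 := (Real.sinh_pos_iff.mpr hα).ne'
  have hshpos : 0 < Real.sinh α := Real.sinh_pos_iff.mpr hα
  have htanh : Real.tanh α = Real.sinh α / Real.cosh α := Real.tanh_eq_sinh_div_cosh α
  have htanhpos : 0 < Real.tanh α := by
    rw [htanh]; exact div_pos hshpos (Real.cosh_pos α)
  have hcothpos : 0 < Real.cosh α / Real.sinh α := div_pos (Real.cosh_pos α) hshpos
  refine ⟨fun htan => ?_, fun htan => ?_, fun htan => ?_, fun htan => ?_⟩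
  · -- cos cosh, σ = α tanh α
    have hcos : Real.cos α ≠ 0 := by
      intro h
      rw [Real.tan_eq_sin_div_cos, h, div_zero] at htan
      linarith [htan, htanhpos]
    have hA : -(α * Real.sin α) = (α * Real.tanh α) * Real.cos α := by
      rw [Real.tan_eq_sin_div_cos, htanh] at htan
      rw [htanh]
      field_simp at htan ⊢
      linear_combination (-1) * htan
    have hB : α * Real.sinh α = (α * Real.tanh α) * Real.cosh α := by
      rw [htanh]; field_simp
    exact steklov_sep α _ _ _ _ _ (hd_cos α) (hd_cos' α) (hd_cosh α) (hd_cosh' α)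
      (by simpa using hA)
      (by simpa [Real.sin_neg, Real.cos_neg] using hA)
      (by simpa using hB)
      (by simpa [Real.sinh_neg, Real.cosh_neg] using hB)
  · -- sin cosh, σ = α tanh α
    have hcos : Real.cos α ≠ 0 := by
      intro h
      rw [Real.tan_eq_sin_div_cos, h, div_zero] at htan
      linarith [htan, hcothpos]
    have hA : α * Real.cos α = (α * Real.tanh α) * Real.sin α := by
      rw [Real.tan_eq_sin_div_cos] at htan
      rw [htanh]
      field_simp at htan ⊢
      linear_combination (-1) * htan
    have hB : α * Real.sinh α = (α * Real.tanh α) * Real.cosh α := by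
      rw [htanh]; field_simp
    exact steklov_sep α _ _ _ _ _ (hd_sin α) (hd_sin' α) (hd_cosh α) (hd_cosh' α)
      (by simpa using hA)
      (by simpa [Real.sin_neg, Real.cos_neg] using hA)
      (by simpa using hB)
      (by simpa [Real.sinh_neg, Real.cosh_neg] using hB)
  · -- cos sinh, σ = α coth α
    have hcos : Real.cos α ≠ 0 := by
      intro h
      rw [Real.tan_eq_sin_div_cos, h, div_zero] at htan
      linarith [htan, hcothpos]
    have hA : -(α * Real.sin α) = (α * (Real.cosh α / Real.sinh α)) * Real.cos α := by
      rw [Real.tan_eq_sin_div_cos] at htan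
      field_simp at htan ⊢
      linear_combination (-1) * htan
    have hB : α * Real.cosh α = (α * (Real.cosh α / Real.sinh α)) * Real.sinh α := by
      field_simp
    exact steklov_sep α _ _ _ _ _ (hd_cos α) (hd_cos' α) (hd_sinh α) (hd_sinh' α)
      (by simpa using hA)
      (by simpa [Real.sin_neg, Real.cos_neg] using hA)
      (by simpa using hB)
      (by simpa [Real.sinh_neg, Real.cosh_neg] using hB)
  · -- sin sinh, σ = α coth α
    have hcos : Real.cos α ≠ 0 := by
      intro h
      rw [Real.tan_eq_sin_div_cos, h, div_zero] at htan
      linarith [htan, htanhpos]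
    have hA : α * Real.cos α = (α * (Real.cosh α / Real.sinh α)) * Real.sin α := by
      rw [Real.tan_eq_sin_div_cos, htanh] at htan
      field_simp at htan ⊢
      linear_combination (-1) * htan
    have hB : α * Real.cosh α = (α * (Real.cosh α / Real.sinh α)) * Real.sinh α := by
      field_simp
    exact steklov_sep α _ _ _ _ _ (hd_sin α) (hd_sin' α) (hd_sinh α) (hd_sinh' α)
      (by simpa using hA)
      (by simpa [Real.sin_neg, Real.cos_neg] using hA)
      (by simpa using hB)
      (by simpa [Real.sinh_neg, Real.cosh_neg] using hB)
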